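/- Let r ≥ 3 be an odd integer and let n be an even integer with n ≥ 2r. Then f_r(n) ≤ 2·f_r(n/2) + 2·f_1(n/2)·f_{r−1}(n/2) + 2·f_2(n/2)·f_{r−2}(n/2) + ⋯ + 2·f_{(r−1)/2}(n/2)·f_{(r+1)/2}(n/2), i.e., f_r(n) ≤ 2·∑_{i=0}^{(r−1)/2} f_i(n/2)·f_{r−i}(n/2), where by convention f_0(n/2) = f_1(n/2) = 1. -/
import Mathlib


/-- A complete `r`-partite `r`-graph (a "block") on a finite vertex set `V ⊆ ℕ`:
it is determined by `r` pairwise disjoint nonempty subsets of `V`. -/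
structure Block (V : Finset ℕ) (r : ℕ) where
  parts : Fin r → Finset ℕ
  nonempty : ∀ i, (parts i).Nonempty
  subset : ∀ i, parts i ⊆ V
  disj : ∀ i j, i ≠ j → Disjoint (parts i) (parts j)

/-- The edge set of a block: all sets contained in the union of the parts
meeting each part in exactly one vertex. -/
def Block.edges {V : Finset ℕ} {r : ℕ} (B : Block V r) : Set (Finset ℕ) :=
  {X | (∀ i, (X ∩ B.parts i).card = 1) ∧ ∀ x ∈ X, ∃ i, x ∈ B.parts i}

/-- `ExactCover V r k F` : there are `k` complete `r`-partite `r`-graphs on `V`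
whose edge sets are pairwise disjoint and whose union is the family `F`. -/
def ExactCover (V : Finset ℕ) (r k : ℕ) (F : Set (Finset ℕ)) : Prop :=
  ∃ B : Fin k → Block V r,
    (∀ i j, i ≠ j → Disjoint (B i).edges (B j).edges) ∧
    (⋃ i, (B i).edges) = F

/-- `f r n` : the minimum number of complete `r`-partite `r`-graphs needed to
partition the edge set of the complete `r`-uniform hypergraph on `[n]`. -/
noncomputable def f (r n : ℕ) : ℕ :=
  sInf {k | ExactCover (Finset.range n) r k
    {X | X ⊆ Finset.range n ∧ X.card = r}}

open Finset

/-- The block whose parts are the singletons of the elements of an `r`-set. -/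
def singletonBlock (V : Finset ℕ) {r : ℕ} {X : Finset ℕ} (hXV : X ⊆ V) (hX : X.card = r) :
    Block V r where
  parts i := {X.orderEmbOfFin hX i}
  nonempty i := ⟨_, Finset.mem_singleton_self _⟩
  subset i := by
    rw [Finset.singleton_subset_iff]
    exact hXV (X.orderEmbOfFin_mem hX i)
  disj i j hij := by
    rw [Finset.disjoint_singleton]
    exact fun h => hij ((X.orderEmbOfFin hX).injective h)

lemma singletonBlock_edges (V : Finset ℕ) {r : ℕ} {X : Finset ℕ} (hXV : X ⊆ V)
    (hX : X.card = r) : (singletonBlock V hXV hX).edges = {X} := by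
  ext Y
  simp only [Block.edges, Set.mem_setOf_eq, Set.mem_singleton_iff, singletonBlock]
  constructor
  · rintro ⟨h1, h2⟩
    apply Finset.Subset.antisymm
    · intro y hy
      obtain ⟨i, hi⟩ := h2 y hy
      rw [Finset.mem_singleton] at hi
      subst hi
      exact X.orderEmbOfFin_mem hX i
    · intro x hx
      have : x ∈ Set.range (X.orderEmbOfFin hX) := by
        rw [X.range_orderEmbOfFin hX]; exact hx
      obtain ⟨i, rfl⟩ := this
      have := h1 i
      have hne : (Y ∩ {X.orderEmbOfFin hX i}).Nonempty := by
        rw [← Finset.card_pos, this]; norm_num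
      obtain ⟨z, hz⟩ := hne
      rw [Finset.mem_inter, Finset.mem_singleton] at hz
      rw [← hz.2]; exact hz.1
  · rintro rfl
    refine ⟨fun i => ?_, fun x hx => ?_⟩
    · rw [Finset.inter_singleton_of_mem (Finset.orderEmbOfFin_mem _ hX i)]
      simp
    · have : x ∈ Set.range (Finset.orderEmbOfFin _ hX) := by
        rw [Finset.range_orderEmbOfFin _ hX]; exact hx
      obtain ⟨i, rfl⟩ := this
      exact ⟨i, Finset.mem_singleton_self _⟩

lemma exists_exactCover (V : Finset ℕ) (r : ℕ) :
    ∃ k, ExactCover V r k {X | X ⊆ V ∧ X.card = r} := by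
  classical
  set S := V.powersetCard r with hS
  refine ⟨S.card, fun i => singletonBlock V
    (Finset.mem_powersetCard.mp (S.equivFin.symm i).2).1
    (Finset.mem_powersetCard.mp (S.equivFin.symm i).2).2, fun i j hij => ?_, ?_⟩
  · rw [singletonBlock_edges, singletonBlock_edges, Set.disjoint_singleton]
    intro h
    exact hij (S.equivFin.symm.injective (Subtype.ext h))
  · ext Y
    simp only [Set.mem_iUnion, singletonBlock_edges, Set.mem_singleton_iff, Set.mem_setOf_eq]
    constructor
    · rintro ⟨i, rfl⟩
      exact Finset.mem_powersetCard.mp (S.equivFin.symm i).2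
    · intro hY
      refine ⟨S.equivFin ⟨Y, Finset.mem_powersetCard.mpr hY⟩, ?_⟩
      rw [Equiv.symm_apply_apply]

lemma f_cover (r n : ℕ) :
    ExactCover (Finset.range n) r (f r n) {X | X ⊆ Finset.range n ∧ X.card = r} :=
  Nat.sInf_mem (exists_exactCover _ _)

/-! ### Transport along an injection -/

def Block.map {V : Finset ℕ} {r : ℕ} (g : ℕ → ℕ) (hg : Function.Injective g)
    (B : Block V r) : Block (V.image g) r where
  parts i := (B.parts i).image g
  nonempty i := (B.nonempty i).image g
  subset i := Finset.image_subset_image (B.subset i)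
  disj i j hij := (Finset.disjoint_image hg).mpr (B.disj i j hij)

lemma Block.map_edges {V : Finset ℕ} {r : ℕ} (g : ℕ → ℕ) (hg : Function.Injective g)
    (B : Block V r) : (B.map g hg).edges = (Finset.image g) '' B.edges := by
  ext X
  constructor
  · rintro ⟨h1, h2⟩
    have hXV : X ⊆ V.image g := by
      intro x hx
      obtain ⟨i, hi⟩ := h2 x hx
      exact Finset.image_subset_image (B.subset i) hi
    obtain ⟨X0, hX0V, rfl⟩ := Finset.subset_image_iff.mp hXV
    refine ⟨X0, ⟨fun i => ?_, fun x hx => ?_⟩, rfl⟩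
    · have := h1 i
      rw [show (X0.image g ∩ (B.map g hg).parts i) = (X0 ∩ B.parts i).image g from
        (Finset.image_inter _ _ hg).symm] at this
      rwa [Finset.card_image_of_injective _ hg] at this
    · obtain ⟨i, hi⟩ := h2 (g x) (Finset.mem_image_of_mem g hx)
      obtain ⟨y, hy, hyx⟩ := Finset.mem_image.mp hi
      rw [← hg hyx]
      exact ⟨i, hy⟩
  · rintro ⟨X0, ⟨h1, h2⟩, rfl⟩
    refine ⟨fun i => ?_, fun x hx => ?_⟩
    · rw [show (X0.image g ∩ (B.map g hg).parts i) = (X0 ∩ B.parts i).image g from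
        (Finset.image_inter _ _ hg).symm, Finset.card_image_of_injective _ hg]
      exact h1 i
    · obtain ⟨y, hy, rfl⟩ := Finset.mem_image.mp hx
      obtain ⟨i, hi⟩ := h2 y hy
      exact ⟨i, Finset.mem_image_of_mem g hi⟩

lemma ExactCover.map {V : Finset ℕ} {r k : ℕ} {F : Set (Finset ℕ)} (g : ℕ → ℕ)
    (hg : Function.Injective g) (h : ExactCover V r k F) :
    ExactCover (V.image g) r k ((Finset.image g) '' F) := by
  obtain ⟨B, hd, hu⟩ := h
  refine ⟨fun i => (B i).map g hg, fun i j hij => ?_, ?_⟩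
  · rw [Block.map_edges, Block.map_edges]
    exact (Set.disjoint_image_iff (Finset.image_injective hg)).mpr (hd i j hij)
  · simp only [Block.map_edges, ← Set.image_iUnion, hu]

/-! ### Combining blocks on disjoint vertex sets -/

def Block.combine {A B : Finset ℕ} {a b : ℕ} (hAB : Disjoint A B)
    (Ba : Block A a) (Bb : Block B b) : Block (A ∪ B) (a + b) where
  parts := Fin.append Ba.parts Bb.parts
  nonempty i := by
    refine Fin.addCases (fun j => ?_) (fun j => ?_) i
    · rw [Fin.append_left]; exact Ba.nonempty j
    · rw [Fin.append_right]; exact Bb.nonempty j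
  subset i := by
    refine Fin.addCases (fun j => ?_) (fun j => ?_) i
    · rw [Fin.append_left]; exact (Ba.subset j).trans Finset.subset_union_left
    · rw [Fin.append_right]; exact (Bb.subset j).trans Finset.subset_union_right
  disj i j hij := by
    have rep : ∀ k : Fin (a + b), (∃ k₀, k = Fin.castAdd b k₀) ∨ (∃ k₀, k = Fin.natAdd a k₀) :=
      fun k => Fin.addCases (fun k₀ => Or.inl ⟨k₀, rfl⟩) (fun k₀ => Or.inr ⟨k₀, rfl⟩) k
    rcases rep i with ⟨i₀, rfl⟩ | ⟨i₀, rfl⟩ <;> rcases rep j with ⟨j₀, rfl⟩ | ⟨j₀, rfl⟩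
    · rw [Fin.append_left, Fin.append_left]
      exact Ba.disj i₀ j₀ (fun h => hij (by rw [h]))
    · rw [Fin.append_left, Fin.append_right]
      exact hAB.mono (Ba.subset i₀) (Bb.subset j₀)
    · rw [Fin.append_right, Fin.append_left]
      exact (hAB.mono (Ba.subset j₀) (Bb.subset i₀)).symm
    · rw [Fin.append_right, Fin.append_right]
      exact Bb.disj i₀ j₀ (fun h => hij (by rw [h]))

lemma Block.combine_parts {A B : Finset ℕ} {a b : ℕ} (hAB : Disjoint A B)
    (Ba : Block A a) (Bb : Block B b) :
    (Ba.combine hAB Bb).parts = Fin.append Ba.parts Bb.parts := rfl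

lemma Block.combine_edges {A B : Finset ℕ} {a b : ℕ} (hAB : Disjoint A B)
    (Ba : Block A a) (Bb : Block B b) :
    (Ba.combine hAB Bb).edges =
      {X | X ⊆ A ∪ B ∧ (X ∩ A) ∈ Ba.edges ∧ (X ∩ B) ∈ Bb.edges} := by
  have hPa : ∀ (X : Finset ℕ) (i : Fin a), X ∩ Ba.parts i = (X ∩ A) ∩ Ba.parts i := by
    intro X i
    rw [Finset.inter_assoc, Finset.inter_eq_right.mpr (Ba.subset i)]
  have hPb : ∀ (X : Finset ℕ) (i : Fin b), X ∩ Bb.parts i = (X ∩ B) ∩ Bb.parts i := by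
    intro X i
    rw [Finset.inter_assoc, Finset.inter_eq_right.mpr (Bb.subset i)]
  ext X
  constructor
  · rintro ⟨h1, h2⟩
    have hXsub : X ⊆ A ∪ B := by
      intro x hx
      obtain ⟨i, hi⟩ := h2 x hx
      exact (Block.combine hAB Ba Bb).subset i hi
    refine ⟨hXsub, ⟨fun i => ?_, fun x hx => ?_⟩, ⟨fun i => ?_, fun x hx => ?_⟩⟩
    · have := h1 (Fin.castAdd b i)
      rw [show (Block.combine hAB Ba Bb).parts (Fin.castAdd b i) = Ba.parts i from
        Fin.append_left _ _ i] at this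
      rwa [← hPa]
    · rw [Finset.mem_inter] at hx
      obtain ⟨i, hi⟩ := h2 x hx.1
      rcases Fin.addCases (motive := fun k => x ∈ (Block.combine hAB Ba Bb).parts k →
          (∃ i₀, x ∈ Ba.parts i₀) ∨ (∃ i₀, x ∈ Bb.parts i₀))
        (fun i₀ h => Or.inl ⟨i₀, by rwa [Block.combine_parts, Fin.append_left] at h⟩)
        (fun i₀ h => Or.inr ⟨i₀, by rwa [Block.combine_parts, Fin.append_right] at h⟩) i hi with h | ⟨i₀, hi₀⟩
      · exact h
      · exact absurd hx.2 (fun hA => hAB.forall_ne_finset hA (Bb.subset i₀ hi₀) rfl)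
    · have := h1 (Fin.natAdd a i)
      rw [show (Block.combine hAB Ba Bb).parts (Fin.natAdd a i) = Bb.parts i from
        Fin.append_right _ _ i] at this
      rwa [← hPb]
    · rw [Finset.mem_inter] at hx
      obtain ⟨i, hi⟩ := h2 x hx.1
      rcases Fin.addCases (motive := fun k => x ∈ (Block.combine hAB Ba Bb).parts k →
          (∃ i₀, x ∈ Ba.parts i₀) ∨ (∃ i₀, x ∈ Bb.parts i₀))
        (fun i₀ h => Or.inl ⟨i₀, by rwa [Block.combine_parts, Fin.append_left] at h⟩)
        (fun i₀ h => Or.inr ⟨i₀, by rwa [Block.combine_parts, Fin.append_right] at h⟩) i hi with ⟨i₀, hi₀⟩ | h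
      · exact absurd hx.2 (fun hB => hAB.forall_ne_finset (Ba.subset i₀ hi₀) hB rfl)
      · exact h
  · rintro ⟨hXsub, ⟨ha1, ha2⟩, ⟨hb1, hb2⟩⟩
    refine ⟨fun i => ?_, fun x hx => ?_⟩
    · refine Fin.addCases (fun j => ?_) (fun j => ?_) i
      · rw [show (Block.combine hAB Ba Bb).parts (Fin.castAdd b j) = Ba.parts j from
          Fin.append_left _ _ j, hPa]
        exact ha1 j
      · rw [show (Block.combine hAB Ba Bb).parts (Fin.natAdd a j) = Bb.parts j from
          Fin.append_right _ _ j, hPb]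
        exact hb1 j
    · rcases Finset.mem_union.mp (hXsub hx) with h | h
      · obtain ⟨i, hi⟩ := ha2 x (Finset.mem_inter.mpr ⟨hx, h⟩)
        exact ⟨Fin.castAdd b i, by rw [show (Block.combine hAB Ba Bb).parts (Fin.castAdd b i) =
          Ba.parts i from Fin.append_left _ _ i]; exact hi⟩
      · obtain ⟨i, hi⟩ := hb2 x (Finset.mem_inter.mpr ⟨hx, h⟩)
        exact ⟨Fin.natAdd a i, by rw [show (Block.combine hAB Ba Bb).parts (Fin.natAdd a i) =
          Bb.parts i from Fin.append_right _ _ i]; exact hi⟩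

lemma ExactCover.prod {A B : Finset ℕ} {a b ka kb : ℕ} {Fa Fb : Set (Finset ℕ)}
    (hAB : Disjoint A B) (ha : ExactCover A a ka Fa) (hb : ExactCover B b kb Fb) :
    ExactCover (A ∪ B) (a + b) (ka * kb)
      {X | X ⊆ A ∪ B ∧ (X ∩ A) ∈ Fa ∧ (X ∩ B) ∈ Fb} := by
  obtain ⟨Ba, hd1, hu1⟩ := ha
  obtain ⟨Bb, hd2, hu2⟩ := hb
  refine ⟨fun p => (Ba (finProdFinEquiv.symm p).1).combine hAB (Bb (finProdFinEquiv.symm p).2),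
    fun p q hpq => ?_, ?_⟩
  · rw [Block.combine_edges, Block.combine_edges]
    rw [Set.disjoint_left]
    rintro X ⟨_, hXa, hXb⟩ ⟨_, hYa, hYb⟩
    have hne : finProdFinEquiv.symm p ≠ finProdFinEquiv.symm q :=
      fun h => hpq (finProdFinEquiv.symm.injective h)
    by_cases h1 : (finProdFinEquiv.symm p).1 = (finProdFinEquiv.symm q).1
    · have h2 : (finProdFinEquiv.symm p).2 ≠ (finProdFinEquiv.symm q).2 :=
        fun h => hne (Prod.ext h1 h)
      exact Set.disjoint_left.mp (hd2 _ _ h2) hXb hYb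
    · exact Set.disjoint_left.mp (hd1 _ _ h1) hXa hYa
  · ext X
    simp only [Set.mem_iUnion, Block.combine_edges, Set.mem_setOf_eq, ← hu1, ← hu2]
    constructor
    · rintro ⟨p, h⟩
      exact ⟨h.1, ⟨_, h.2.1⟩, ⟨_, h.2.2⟩⟩
    · rintro ⟨hs, ⟨i, hi⟩, ⟨j, hj⟩⟩
      refine ⟨finProdFinEquiv (i, j), ?_⟩
      rw [Equiv.symm_apply_apply]
      exact ⟨hs, hi, hj⟩

/-! ### Unions of exact covers -/

lemma ExactCover.union {V : Finset ℕ} {r k₁ k₂ : ℕ} {F₁ F₂ : Set (Finset ℕ)}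
    (h1 : ExactCover V r k₁ F₁) (h2 : ExactCover V r k₂ F₂) (hF : Disjoint F₁ F₂) :
    ExactCover V r (k₁ + k₂) (F₁ ∪ F₂) := by
  obtain ⟨B1, hd1, hu1⟩ := h1
  obtain ⟨B2, hd2, hu2⟩ := h2
  have rep : ∀ k : Fin (k₁ + k₂), (∃ k₀, k = Fin.castAdd k₂ k₀) ∨ (∃ k₀, k = Fin.natAdd k₁ k₀) :=
    fun k => Fin.addCases (fun k₀ => Or.inl ⟨k₀, rfl⟩) (fun k₀ => Or.inr ⟨k₀, rfl⟩) k
  have hsub1 : ∀ i, (B1 i).edges ⊆ F₁ := fun i => hu1 ▸ Set.subset_iUnion (fun i => (B1 i).edges) i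
  have hsub2 : ∀ i, (B2 i).edges ⊆ F₂ := fun i => hu2 ▸ Set.subset_iUnion (fun i => (B2 i).edges) i
  refine ⟨Fin.append B1 B2, fun i j hij => ?_, ?_⟩
  · rcases rep i with ⟨i₀, rfl⟩ | ⟨i₀, rfl⟩ <;> rcases rep j with ⟨j₀, rfl⟩ | ⟨j₀, rfl⟩
    · rw [Fin.append_left, Fin.append_left]
      exact hd1 i₀ j₀ (fun h => hij (by rw [h]))
    · rw [Fin.append_left, Fin.append_right]
      exact hF.mono (hsub1 i₀) (hsub2 j₀)
    · rw [Fin.append_right, Fin.append_left]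
      exact (hF.mono (hsub1 j₀) (hsub2 i₀)).symm
    · rw [Fin.append_right, Fin.append_right]
      exact hd2 i₀ j₀ (fun h => hij (by rw [h]))
  · ext X
    simp only [Set.mem_iUnion, Set.mem_union, ← hu1, ← hu2]
    constructor
    · rintro ⟨i, hi⟩
      rcases rep i with ⟨i₀, rfl⟩ | ⟨i₀, rfl⟩
      · rw [Fin.append_left] at hi
        exact Or.inl ⟨i₀, hi⟩
      · rw [Fin.append_right] at hi
        exact Or.inr ⟨i₀, hi⟩
    · rintro (⟨i, hi⟩ | ⟨i, hi⟩)
      · exact ⟨Fin.castAdd k₂ i, by rw [Fin.append_left]; exact hi⟩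
      · exact ⟨Fin.natAdd k₁ i, by rw [Fin.append_right]; exact hi⟩

lemma ExactCover.empty {V : Finset ℕ} {r : ℕ} : ExactCover V r 0 (∅ : Set (Finset ℕ)) :=
  ⟨fun i => i.elim0, fun i => i.elim0, by simp⟩

lemma ExactCover.finsetSum {V : Finset ℕ} {r : ℕ} {ι : Type} [DecidableEq ι] (s : Finset ι)
    (G : ι → Set (Finset ℕ)) (k : ι → ℕ)
    (hd : ∀ i ∈ s, ∀ j ∈ s, i ≠ j → Disjoint (G i) (G j))
    (hc : ∀ i ∈ s, ExactCover V r (k i) (G i)) :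
    ExactCover V r (∑ i ∈ s, k i) (⋃ i ∈ s, G i) := by
  induction s using Finset.induction_on with
  | empty => simpa using ExactCover.empty
  | @insert a s ha ih =>
    rw [Finset.sum_insert ha, Finset.set_biUnion_insert]
    refine ExactCover.union (hc a (Finset.mem_insert_self a s))
      (ih (fun i hi j hj hij => hd i (Finset.mem_insert_of_mem hi) j (Finset.mem_insert_of_mem hj) hij)
        (fun i hi => hc i (Finset.mem_insert_of_mem hi))) ?_
    rw [Set.disjoint_iUnion₂_right]
    intro i hi
    exact hd a (Finset.mem_insert_self a s) i (Finset.mem_insert_of_mem hi)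
      (fun h => ha (h ▸ hi))

/-! ### Specialized covers -/

lemma cover_G {A B : Finset ℕ} {a b ka kb : ℕ} (hAB : Disjoint A B)
    (ha : ExactCover A a ka {X | X ⊆ A ∧ X.card = a})
    (hb : ExactCover B b kb {Y | Y ⊆ B ∧ Y.card = b}) :
    ExactCover (A ∪ B) (a + b) (ka * kb)
      {X | X ⊆ A ∪ B ∧ (X ∩ A).card = a ∧ (X ∩ B).card = b} := by
  have h1 := ExactCover.prod hAB ha hb
  convert h1 using 1
  ext X
  simp only [Set.mem_setOf_eq]
  exact ⟨fun ⟨h1, h2, h3⟩ => ⟨h1, ⟨Finset.inter_subset_right, h2⟩, ⟨Finset.inter_subset_right, h3⟩⟩,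
    fun ⟨h1, ⟨_, h2⟩, ⟨_, h3⟩⟩ => ⟨h1, h2, h3⟩⟩

lemma cover_of_image (m b : ℕ) (g : ℕ → ℕ) (hg : Function.Injective g) :
    ExactCover ((Finset.range m).image g) b (f b m)
      {Y | Y ⊆ (Finset.range m).image g ∧ Y.card = b} := by
  have h := (f_cover b m).map g hg
  convert h using 1
  ext Y
  constructor
  · rintro ⟨hs, hc⟩
    obtain ⟨X, hX, rfl⟩ := Finset.subset_image_iff.mp hs
    exact ⟨X, ⟨hX, by rwa [Finset.card_image_of_injective _ hg] at hc⟩, rfl⟩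
  · rintro ⟨X, ⟨hs, hc⟩, rfl⟩
    exact ⟨Finset.image_subset_image hs, by rw [Finset.card_image_of_injective _ hg, hc]⟩


theorem f_odd_recurrence (r n : ℕ) (hr : 3 ≤ r) (hro : Odd r) (hne : Even n) (hn : 2 * r ≤ n) :
    f r n ≤ 2 * (∑ i ∈ Finset.range ((r - 1) / 2 + 1), f i (n / 2) * f (r - i) (n / 2)) := by
  classical
  obtain ⟨t, ht⟩ := hro
  have hn2 : n / 2 * 2 = n := Nat.div_two_mul_two_of_even hne
  have htr : (r - 1) / 2 = t := by omega
  set m := n / 2 with hm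
  have hrm : r ≤ m := by omega
  set g : ℕ → ℕ := (· + m) with hgdef
  have hginj : Function.Injective g := add_left_injective m
  set A := Finset.range m with hA
  set B := A.image g with hB
  have hAB : Disjoint A B := by
    rw [Finset.disjoint_left]
    intro x hx hxB
    rw [hA, Finset.mem_range] at hx
    rw [hB, Finset.mem_image] at hxB
    obtain ⟨y, hy, rfl⟩ := hxB
    simp only [hgdef] at hx
    omega
  have hUn : A ∪ B = Finset.range n := by
    ext x
    simp only [Finset.mem_union, hB, hA, Finset.mem_image, Finset.mem_range, hgdef]
    constructor
    · rintro (h | ⟨y, hy, rfl⟩) <;> omega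
    · intro h
      by_cases hxm : x < m
      · exact Or.inl hxm
      · exact Or.inr ⟨x - m, by omega, by omega⟩
  have hcard : ∀ X : Finset ℕ, X ⊆ Finset.range n → X.card = (X ∩ A).card + (X ∩ B).card := by
    intro X hX
    have hXeq : X ∩ A ∪ X ∩ B = X := by
      rw [← Finset.inter_union_distrib_left, hUn, Finset.inter_eq_left.mpr hX]
    conv_lhs => rw [← hXeq]
    rw [Finset.card_union_of_disjoint
      (hAB.mono Finset.inter_subset_right Finset.inter_subset_right)]
  -- the two families for each i
  set Gp : ℕ → Set (Finset ℕ) := fun i =>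
    {X | X ⊆ Finset.range n ∧ (X ∩ A).card = i ∧ (X ∩ B).card = r - i} with hGp
  set Gm : ℕ → Set (Finset ℕ) := fun i =>
    {X | X ⊆ Finset.range n ∧ (X ∩ A).card = r - i ∧ (X ∩ B).card = i} with hGm
  set c : ℕ → ℕ := fun i => f i m * f (r - i) m + f (r - i) m * f i m with hc
  -- cover of Gp i
  have covGp : ∀ i, i ≤ t → ExactCover (Finset.range n) r (f i m * f (r - i) m) (Gp i) := by
    intro i hi
    have h1 := cover_G hAB (f_cover i m) (cover_of_image m (r - i) g hginj)
    rw [show i + (r - i) = r by omega, hUn] at h1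
    exact h1
  have covGm : ∀ i, i ≤ t → ExactCover (Finset.range n) r (f (r - i) m * f i m) (Gm i) := by
    intro i hi
    have h1 := cover_G hAB (f_cover (r - i) m) (cover_of_image m i g hginj)
    rw [show (r - i) + i = r by omega, hUn] at h1
    exact h1
  have covH : ∀ i ∈ Finset.range (t + 1), ExactCover (Finset.range n) r (c i) (Gp i ∪ Gm i) := by
    intro i hi
    rw [Finset.mem_range] at hi
    refine ExactCover.union (covGp i (by omega)) (covGm i (by omega)) ?_
    rw [Set.disjoint_left]
    rintro X ⟨_, h1, _⟩ ⟨_, h2, _⟩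
    omega
  have hdH : ∀ i ∈ Finset.range (t + 1), ∀ j ∈ Finset.range (t + 1), i ≠ j →
      Disjoint (Gp i ∪ Gm i) (Gp j ∪ Gm j) := by
    intro i hi j hj hij
    rw [Finset.mem_range] at hi hj
    rw [Set.disjoint_left]
    rintro X (⟨_, h1, h2⟩ | ⟨_, h1, h2⟩) (⟨_, h3, h4⟩ | ⟨_, h3, h4⟩) <;> omega
  have hcovTotal := ExactCover.finsetSum (Finset.range (t + 1)) (fun i => Gp i ∪ Gm i) c hdH covH
  have hUnion : (⋃ i ∈ Finset.range (t + 1), (Gp i ∪ Gm i)) =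
      {X | X ⊆ Finset.range n ∧ X.card = r} := by
    ext X
    simp only [Set.mem_iUnion, Set.mem_union, Finset.mem_range, Set.mem_setOf_eq, hGp, hGm,
      exists_prop]
    constructor
    · rintro ⟨i, hi, (⟨hs, h1, h2⟩ | ⟨hs, h1, h2⟩)⟩ <;>
        exact ⟨hs, by rw [hcard X hs]; omega⟩
    · rintro ⟨hs, hcr⟩
      have h1 := hcard X hs
      by_cases hj : (X ∩ A).card ≤ t
      · exact ⟨(X ∩ A).card, by omega, Or.inl ⟨hs, rfl, by omega⟩⟩
      · exact ⟨r - (X ∩ A).card, by omega, Or.inr ⟨hs, by omega, by omega⟩⟩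
  rw [hUnion] at hcovTotal
  have hle : f r n ≤ ∑ i ∈ Finset.range (t + 1), c i := Nat.sInf_le hcovTotal
  calc f r n ≤ ∑ i ∈ Finset.range (t + 1), c i := hle
    _ = 2 * (∑ i ∈ Finset.range ((r - 1) / 2 + 1), f i (n / 2) * f (r - i) (n / 2)) := by
        rw [htr, Finset.mul_sum]
        exact Finset.sum_congr rfl (fun i _ => by rw [hc]; ring)
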